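/- arXiv:alg-geom/9702010 — 2 statements merged into one kernel-verified Lean document; each statement's English description precedes it below -/
import Mathlib

section
/- For every integer n ≥ 2, the following identity holds in the ring of formal power series in the variables X_i (i ∈ I) with coefficients in the Laurent polynomial ring ℤ[t,t^{−1}]: Σ_{α∈ℕ[I]} ( Σ_{γ,β∈ℕ[I], γ+β=α} Σ_{κ∈𝔎(γ)} Σ_{λ∈𝔎(β)} t^{K(κ)−K(λ)} ) X^α = ∏_{1≤q≤p≤n−1} ( (1 − t·X^{θ_{q,p}})·(1 − t^{−1}·X^{θ_{q,p}}) )^{−1}. -/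
open scoped BigOperators

/-- Pairs `(q, p)` with `q ≤ p`, indexing the positive coroots of `SL_n`
(vertices of the Dynkin diagram are zero-indexed, so `Fin (n-1)` is `I = {1,…,n-1}`). -/
def KPair (n : ℕ) : Type := {pq : Fin (n - 1) × Fin (n - 1) // pq.1 ≤ pq.2}

instance (n : ℕ) : Fintype (KPair n) :=
  inferInstanceAs (Fintype {pq : Fin (n - 1) × Fin (n - 1) // pq.1 ≤ pq.2})

/-- The positive coroot `θ_{q,p}`: the indicator vector of the interval `{q, …, p}`. -/
noncomputable def theta {n : ℕ} (pq : KPair n) : Fin (n - 1) →₀ ℕ :=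
  Finsupp.equivFunOnFinite.symm fun i => if pq.1.1 ≤ i ∧ i ≤ pq.1.2 then 1 else 0

/-- The element of `ℕ[I]` of which `κ` is a Kostant partition:
`Σ_{1≤q≤p≤n−1} κ_{p,q} · θ_{q,p}`. -/
noncomputable def weight {n : ℕ} (κ : KPair n →₀ ℕ) : Fin (n - 1) →₀ ℕ :=
  κ.sum fun pq c => c • theta pq

/-- The set `𝔎(γ)` of Kostant partitions of `γ`. -/
def KostantSet {n : ℕ} (γ : Fin (n - 1) →₀ ℕ) : Set (KPair n →₀ ℕ) :=
  {κ | weight κ = γ}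

/-- `K(κ)`, the number of parts of the Kostant partition `κ`. -/
def numParts {n : ℕ} (κ : KPair n →₀ ℕ) : ℕ := κ.sum fun _ c => c

/-- The formal power series with prescribed coefficients:
`genFun c = Σ_γ c(γ) · X^γ`. -/
def genFun {σ R : Type*} (c : (σ →₀ ℕ) → R) : MvPowerSeries σ R := c

/-! ### Auxiliary development -/

section Aux
open scoped Classical

variable {σ : Type*} {R : Type*} [CommRing R]

lemma aux_coeff_apply (n : σ →₀ ℕ) (φ : MvPowerSeries σ R) :
    MvPowerSeries.coeff (R := R) n φ = φ n := rfl

/-- The geometric series `Σ_k a^k X^{kΘ}`. -/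
noncomputable def geomSeries (Θ : σ →₀ ℕ) (a : R) : MvPowerSeries σ R :=
  fun α => if h : ∃ k : ℕ, k • Θ = α then a ^ h.choose else 0

lemma aux_smul_inj {Θ : σ →₀ ℕ} (hΘ : Θ ≠ 0) {k k' : ℕ} (h : k • Θ = k' • Θ) : k = k' := by
  obtain ⟨j, hj⟩ : ∃ j, Θ j ≠ 0 := by
    by_contra h'
    push_neg at h'
    exact hΘ (Finsupp.ext h')
  have hjj := DFunLike.congr_fun h j
  simp only [Finsupp.smul_apply, smul_eq_mul] at hjj
  exact Nat.eq_of_mul_eq_mul_right (Nat.pos_of_ne_zero hj) hjj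

lemma geomSeries_coeff_smul {Θ : σ →₀ ℕ} (hΘ : Θ ≠ 0) (a : R) (k : ℕ) :
    geomSeries Θ a (k • Θ) = a ^ k := by
  have h : ∃ k' : ℕ, k' • Θ = k • Θ := ⟨k, rfl⟩
  rw [geomSeries, dif_pos h, aux_smul_inj hΘ h.choose_spec]

lemma geomSeries_coeff_of_not {Θ : σ →₀ ℕ} (a : R) {α : σ →₀ ℕ}
    (h : ¬ ∃ k : ℕ, k • Θ = α) : geomSeries Θ a α = 0 := dif_neg h

lemma one_sub_monomial_mul_geomSeries {Θ : σ →₀ ℕ} (hΘ : Θ ≠ 0) (a : R) :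
    (1 - MvPowerSeries.monomial (R := R) Θ a) * geomSeries Θ a = 1 := by
  classical
  ext α
  rw [sub_mul, one_mul, map_sub, MvPowerSeries.coeff_monomial_mul,
    MvPowerSeries.coeff_one]
  simp only [aux_coeff_apply]
  by_cases hα : α = 0
  · subst hα
    rw [if_pos rfl, if_neg (by
      intro hle
      exact hΘ (le_antisymm (by simpa using hle) zero_le))]
    have : geomSeries Θ a ((0 : ℕ) • Θ) = a ^ 0 := geomSeries_coeff_smul hΘ a 0
    simpa using this
  · rw [if_neg hα]
    by_cases hle : Θ ≤ α
    · rw [if_pos hle]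
      by_cases hex : ∃ k : ℕ, k • Θ = α
      · obtain ⟨k, hk⟩ := hex
        rcases k with _ | k'
        · exact absurd hk.symm (by simpa using hα)
        · have h1 : α = k' • Θ + Θ := by
            rw [← hk, succ_nsmul]
          have h2 : α - Θ = k' • Θ := by rw [h1, add_tsub_cancel_right]
          rw [h2, geomSeries_coeff_smul hΘ, ← hk, geomSeries_coeff_smul hΘ, pow_succ]
          ring
      · have h2 : ¬ ∃ k : ℕ, k • Θ = α - Θ := by
          rintro ⟨k', hk'⟩
          exact hex ⟨k' + 1, by rw [succ_nsmul, hk', tsub_add_cancel_of_le hle]⟩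
        rw [geomSeries_coeff_of_not a hex, geomSeries_coeff_of_not a h2, mul_zero, sub_zero]
    · rw [if_neg hle]
      have hex : ¬ ∃ k : ℕ, k • Θ = α := by
        rintro ⟨k, hk⟩
        rcases k with _ | k'
        · exact hα (by simpa using hk.symm)
        · exact hle (by rw [← hk, succ_nsmul]; exact le_add_self)
      rw [geomSeries_coeff_of_not a hex, sub_zero]

end Aux

section Key

open scoped Classical

variable {σ ι R : Type*} [Fintype σ] [Fintype ι] [CommRing R]

omit [Fintype σ] in
lemma wt_eq_sum (Θ : ι → σ →₀ ℕ) (μ : ι →₀ ℕ) :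
    (μ.sum fun i c => c • Θ i) = ∑ i, μ i • Θ i :=
  Finsupp.sum_fintype _ _ fun i => zero_smul ℕ (Θ i)

omit [CommRing R] in
lemma kostant_set_finite (Θ : ι → σ →₀ ℕ) (hΘ : ∀ i, Θ i ≠ 0) (α : σ →₀ ℕ) :
    {μ : ι →₀ ℕ | (μ.sum fun i c => c • Θ i) = α}.Finite := by
  set N := ∑ j, α j with hN
  have hbound : ∀ μ ∈ {μ : ι →₀ ℕ | (μ.sum fun i c => c • Θ i) = α}, ∀ i, μ i ≤ N := by
    intro μ hμ i
    have hμ' : ∑ i', μ i' • Θ i' = α := by rw [← wt_eq_sum]; exact hμ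
    have hα : N = ∑ i', μ i' * (∑ j, Θ i' j) := by
      rw [hN, ← hμ']
      have : ∀ j, ((∑ i', μ i' • Θ i') : σ →₀ ℕ) j = ∑ i', μ i' * Θ i' j := by
        intro j
        rw [Finsupp.finset_sum_apply]
        exact Finset.sum_congr rfl fun i' _ => rfl
      rw [Finset.sum_congr rfl fun j _ => this j, Finset.sum_comm]
      exact Finset.sum_congr rfl fun i' _ => (Finset.mul_sum _ _ _).symm
    have h1 : 1 ≤ ∑ j, Θ i j := by
      obtain ⟨j, hj⟩ : ∃ j, Θ i j ≠ 0 := by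
        by_contra h'
        push_neg at h'
        exact hΘ i (Finsupp.ext h')
      calc 1 ≤ Θ i j := Nat.one_le_iff_ne_zero.2 hj
        _ ≤ ∑ j, Θ i j := Finset.single_le_sum (fun _ _ => Nat.zero_le _) (Finset.mem_univ j)
    calc μ i = μ i * 1 := (mul_one _).symm
      _ ≤ μ i * (∑ j, Θ i j) := Nat.mul_le_mul_left _ h1
      _ ≤ ∑ i', μ i' * (∑ j, Θ i' j) :=
          Finset.single_le_sum (f := fun i' => μ i' * ∑ j, Θ i' j)
            (fun _ _ => Nat.zero_le _) (Finset.mem_univ i)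
      _ = N := hα.symm
  rw [← Set.finite_coe_iff]
  refine Finite.of_injective
    (fun μ : {μ : ι →₀ ℕ | (μ.sum fun i c => c • Θ i) = α} =>
      (fun i => (⟨μ.1 i, Nat.lt_succ_of_le (hbound μ.1 μ.2 i)⟩ : Fin (N + 1)))) ?_
  intro μ ν h
  ext i
  exact congrArg Fin.val (congrFun h i)

lemma genFun_eq_prod_geomSeries [DecidableEq σ] [DecidableEq ι]
    (Θ : ι → σ →₀ ℕ) (hΘ : ∀ i, Θ i ≠ 0) (a : ι → R) :
    genFun (fun α => ∑ᶠ μ ∈ {μ : ι →₀ ℕ | (μ.sum fun i c => c • Θ i) = α}, ∏ i, a i ^ μ i)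
      = ∏ i, geomSeries (Θ i) (a i) := by
  ext α
  rw [MvPowerSeries.coeff_prod, aux_coeff_apply]
  show (∑ᶠ μ ∈ {μ : ι →₀ ℕ | (μ.sum fun i c => c • Θ i) = α}, ∏ i, a i ^ μ i) = _
  rw [finsum_mem_eq_finite_toFinset_sum _ (kostant_set_finite Θ hΘ α)]
  refine Finset.sum_bij_ne_zero
    (fun μ _ _ => Finsupp.equivFunOnFinite.symm (fun i => μ i • Θ i)) ?_ ?_ ?_ ?_
  · intro μ h₁ _
    rw [Set.Finite.mem_toFinset] at h₁
    rw [Finset.mem_finsuppAntidiag]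
    constructor
    · calc Finset.univ.sum ⇑(Finsupp.equivFunOnFinite.symm fun i => μ i • Θ i)
          = ∑ i, μ i • Θ i :=
            Finset.sum_congr rfl fun i _ => congrFun (Finsupp.coe_equivFunOnFinite_symm _) _
        _ = α := by rw [← wt_eq_sum]; exact h₁
    · exact Finset.subset_univ _
  · intro μ₁ _ _ μ₂ _ _ h
    have h' := Finsupp.equivFunOnFinite.symm.injective h
    ext i
    exact aux_smul_inj (hΘ i) (congrFun h' i)
  · intro l hl hg
    rw [Finset.mem_finsuppAntidiag] at hl
    have hex : ∀ i, ∃ k : ℕ, k • Θ i = l i := by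
      intro i
      by_contra hni
      exact hg (Finset.prod_eq_zero (Finset.mem_univ i)
        (by rw [aux_coeff_apply]; exact geomSeries_coeff_of_not (a i) hni))
    set μ : ι →₀ ℕ := Finsupp.equivFunOnFinite.symm (fun i => (hex i).choose) with hμ
    have hμv : ∀ i, μ i = (hex i).choose := fun i =>
      congrFun (Finsupp.coe_equivFunOnFinite_symm _) i
    have hμl : ∀ i, μ i • Θ i = l i := fun i => by rw [hμv i]; exact (hex i).choose_spec
    have hmem : μ ∈ (kostant_set_finite Θ hΘ α).toFinset := by
      rw [Set.Finite.mem_toFinset]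
      show (μ.sum fun i c => c • Θ i) = α
      rw [wt_eq_sum, Finset.sum_congr rfl fun i _ => hμl i]
      exact hl.1
    have hval : (∏ i, a i ^ μ i) =
        ∏ i, MvPowerSeries.coeff (R := R) (l i) (geomSeries (Θ i) (a i)) := by
      refine Finset.prod_congr rfl fun i _ => ?_
      rw [aux_coeff_apply, ← hμl i, geomSeries_coeff_smul (hΘ i)]
    refine ⟨μ, hmem, by rw [hval]; exact hg, ?_⟩
    show Finsupp.equivFunOnFinite.symm (fun i => μ i • Θ i) = l
    have he : (fun i => μ i • Θ i) = (Finsupp.equivFunOnFinite l : ι → σ →₀ ℕ) := by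
      funext i; exact hμl i
    rw [he]
    exact Finsupp.equivFunOnFinite.symm_apply_apply l
  · intro μ _ _
    refine Finset.prod_congr rfl fun i _ => ?_
    rw [aux_coeff_apply, Finsupp.coe_equivFunOnFinite_symm, geomSeries_coeff_smul (hΘ i)]

lemma genFun_mul_prod_eq_one [DecidableEq σ] [DecidableEq ι]
    (Θ : ι → σ →₀ ℕ) (hΘ : ∀ i, Θ i ≠ 0) (a : ι → R) :
    genFun (fun α => ∑ᶠ μ ∈ {μ : ι →₀ ℕ | (μ.sum fun i c => c • Θ i) = α}, ∏ i, a i ^ μ i) *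
      ∏ i, (1 - MvPowerSeries.monomial (R := R) (Θ i) (a i)) = 1 := by
  rw [genFun_eq_prod_geomSeries Θ hΘ a, ← Finset.prod_mul_distrib]
  rw [Finset.prod_congr rfl fun i _ =>
    (mul_comm _ _).trans (one_sub_monomial_mul_geomSeries (hΘ i) (a i))]
  exact Finset.prod_const_one

end Key

section Inst

instance (n : ℕ) : DecidableEq (KPair n) :=
  inferInstanceAs (DecidableEq {pq : Fin (n - 1) × Fin (n - 1) // pq.1 ≤ pq.2})

lemma theta_ne_zero {n : ℕ} (pq : KPair n) : theta pq ≠ 0 := by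
  intro h
  have h1 := DFunLike.congr_fun h pq.1.1
  rw [theta, Finsupp.coe_equivFunOnFinite_symm] at h1
  rw [if_pos ⟨le_refl _, pq.2⟩] at h1
  simp at h1

open LaurentPolynomial in
lemma T_prod {β : Type*} (s : Finset β) (f : β → ℤ) :
    ∏ x ∈ s, (T (f x) : LaurentPolynomial ℤ) = T (∑ x ∈ s, f x) := by
  induction s using Finset.cons_induction with
  | empty => simp [T_zero]
  | cons a s ha ih => rw [Finset.prod_cons, Finset.sum_cons, ih, ← T_add]

lemma numParts_cast_eq {n : ℕ} (κ : KPair n →₀ ℕ) :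
    (numParts κ : ℤ) = ∑ pq, (κ pq : ℤ) := by
  rw [numParts, Finsupp.sum_fintype _ _ (fun _ => rfl), Nat.cast_sum]

end Inst

open LaurentPolynomial in
/-- Theorem 2.7 of the paper, combinatorial form. -/
theorem poincare_generating_function (n : ℕ) (hn : 2 ≤ n) :
    genFun (fun α : Fin (n - 1) →₀ ℕ =>
        ∑ᶠ kl ∈ {p : (KPair n →₀ ℕ) × (KPair n →₀ ℕ) | weight p.1 + weight p.2 = α},
          (T ((numParts kl.1 : ℤ) - (numParts kl.2 : ℤ)) : LaurentPolynomial ℤ)) *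
      ∏ pq : KPair n,
        ((1 - MvPowerSeries.monomial (R := LaurentPolynomial ℤ) (theta pq) (T 1)) *
         (1 - MvPowerSeries.monomial (R := LaurentPolynomial ℤ) (theta pq) (T (-1)))) = 1 := by
  classical
  set Θ : (KPair n ⊕ KPair n) → (Fin (n - 1) →₀ ℕ) := Sum.elim theta theta with hΘdef
  set a : (KPair n ⊕ KPair n) → LaurentPolynomial ℤ :=
    Sum.elim (fun _ => T 1) (fun _ => T (-1)) with hadef
  have hΘ : ∀ i, Θ i ≠ 0 := by rintro (pq | pq) <;> exact theta_ne_zero pq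
  set e := (Finsupp.sumFinsuppEquivProdFinsupp :
    (KPair n ⊕ KPair n →₀ ℕ) ≃ (KPair n →₀ ℕ) × (KPair n →₀ ℕ)) with hedef
  -- transport of the weight along `e`
  have hwt : ∀ μ : (KPair n ⊕ KPair n) →₀ ℕ,
      weight (e μ).1 + weight (e μ).2 = μ.sum fun i c => c • Θ i := by
    intro μ
    rw [weight, weight, wt_eq_sum, wt_eq_sum, wt_eq_sum, Fintype.sum_sum_type]
    congr 1
  -- transport of the summand along `e`
  have hval : ∀ μ : (KPair n ⊕ KPair n) →₀ ℕ,
      (∏ i, a i ^ μ i) = T ((numParts (e μ).1 : ℤ) - (numParts (e μ).2 : ℤ)) := by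
    intro μ
    rw [Fintype.prod_sum_type]
    simp only [hadef, Sum.elim_inl, Sum.elim_inr, T_pow, mul_one, mul_neg_one]
    rw [T_prod, T_prod, ← T_add]
    congr 1
    rw [numParts_cast_eq, numParts_cast_eq]
    simp only [hedef, Finsupp.fst_sumFinsuppEquivProdFinsupp,
      Finsupp.snd_sumFinsuppEquivProdFinsupp, sub_eq_add_neg]
    simp [Finset.sum_neg_distrib]
  have hc : (fun α : Fin (n - 1) →₀ ℕ =>
      ∑ᶠ kl ∈ {p : (KPair n →₀ ℕ) × (KPair n →₀ ℕ) | weight p.1 + weight p.2 = α},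
        (T ((numParts kl.1 : ℤ) - (numParts kl.2 : ℤ)) : LaurentPolynomial ℤ))
      = fun α => ∑ᶠ μ ∈ {μ : (KPair n ⊕ KPair n) →₀ ℕ |
          (μ.sum fun i c => c • Θ i) = α}, ∏ i, a i ^ μ i := by
    funext α
    refine (finsum_mem_eq_of_bijOn e ⟨?_, ?_, ?_⟩ fun μ _ => hval μ).symm
    · intro μ hμ
      show weight (e μ).1 + weight (e μ).2 = α
      rw [hwt]; exact hμ
    · exact fun μ₁ _ μ₂ _ h => e.injective h
    · intro p hp
      refine ⟨e.symm p, ?_, e.apply_symm_apply p⟩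
      show ((e.symm p).sum fun i c => c • Θ i) = α
      rw [← hwt, e.apply_symm_apply]; exact hp
  rw [hc]
  have hp : (∏ pq : KPair n,
      ((1 - MvPowerSeries.monomial (R := LaurentPolynomial ℤ) (theta pq) (T 1)) *
       (1 - MvPowerSeries.monomial (R := LaurentPolynomial ℤ) (theta pq) (T (-1)))))
      = ∏ i, (1 - MvPowerSeries.monomial (R := LaurentPolynomial ℤ) (Θ i) (a i)) := by
    rw [Fintype.prod_sum_type]
    simp only [hΘdef, hadef, Sum.elim_inl, Sum.elim_inr]
    exact Finset.prod_mul_distrib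
  rw [hp]
  exact genFun_mul_prod_eq_one Θ hΘ a
end

section
/- Let a ≠ b be complex numbers, R = ℂ[z], T₁ = R/(z−a), and T₂ = R/(z−a) ⊕ R/(z−b), and let f : T₁ → T₂ be a nonzero R-module homomorphism. Call an admissible chain a sequence of pairs (A₀,B₀) ⊆ (A₁,B₁) ⊆ (A₂,B₂) ⊆ (A₃,B₃) with A_k ⊆ T₁ and B_k ⊆ T₂ submodules satisfying f(A_k) ⊆ B_k, (A₀,B₀) = (0,0), (A₃,B₃) = (T₁,T₂); say the k-th step has type 𝗂 if A_k = A_{k−1} and length(B_k/B_{k−1}) = 1, and type 𝗃 if B_k = B_{k−1} and length(A_k/A_{k−1}) = 1. Then there are exactly 2 admissible chains with step types (𝗂,𝗂,𝗃), exactly 1 with step types (𝗂,𝗃,𝗂), and none with step types (𝗃,𝗂,𝗂). -/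
open Order in
/-- The length of a module: the supremum of the lengths of strictly increasing chains of
submodules (the Krull dimension of the submodule lattice). -/
noncomputable def moduleLength (R : Type*) [Ring R] (M : Type*) [AddCommGroup M]
    [Module R M] : WithBot ℕ∞ :=
  krullDim (Submodule R M)

/-- An admissible chain for a `ℂ[z]`-module map `f : T₁ → T₂`: an increasing sequence of
pairs `(A₀,B₀) ⊆ (A₁,B₁) ⊆ (A₂,B₂) ⊆ (A₃,B₃)` of submodules `A_k ⊆ T₁`, `B_k ⊆ T₂` with
`f(A_k) ⊆ B_k`, `(A₀,B₀) = (0,0)` and `(A₃,B₃) = (T₁,T₂)`. -/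
structure AdmChain {M N : Type*} [AddCommGroup M] [Module (Polynomial ℂ) M]
    [AddCommGroup N] [Module (Polynomial ℂ) N] (f : M →ₗ[Polynomial ℂ] N) where
  A : Fin 4 → Submodule (Polynomial ℂ) M
  B : Fin 4 → Submodule (Polynomial ℂ) N
  monoA : Monotone A
  monoB : Monotone B
  compat : ∀ k, (A k).map f ≤ B k
  A_zero : A 0 = ⊥
  B_zero : B 0 = ⊥
  A_last : A 3 = ⊤
  B_last : B 3 = ⊤

/-- The `(k+1)`-st step of an admissible chain has type `𝗂`:
`A_{k+1} = A_k` and `length(B_{k+1}/B_k) = 1`. -/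
def StepI {M N : Type*} [AddCommGroup M] [Module (Polynomial ℂ) M]
    [AddCommGroup N] [Module (Polynomial ℂ) N] {f : M →ₗ[Polynomial ℂ] N}
    (c : AdmChain f) (k : Fin 3) : Prop :=
  c.A k.succ = c.A k.castSucc ∧
  moduleLength (Polynomial ℂ)
    (↥(c.B k.succ) ⧸ (c.B k.castSucc).comap (c.B k.succ).subtype) = 1

/-- The `(k+1)`-st step of an admissible chain has type `𝗃`:
`B_{k+1} = B_k` and `length(A_{k+1}/A_k) = 1`. -/
def StepJ {M N : Type*} [AddCommGroup M] [Module (Polynomial ℂ) M]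
    [AddCommGroup N] [Module (Polynomial ℂ) N] {f : M →ₗ[Polynomial ℂ] N}
    (c : AdmChain f) (k : Fin 3) : Prop :=
  c.B k.succ = c.B k.castSucc ∧
  moduleLength (Polynomial ℂ)
    (↥(c.A k.succ) ⧸ (c.A k.castSucc).comap (c.A k.succ).subtype) = 1

/-! ### Auxiliary material -/

open Order Submodule Polynomial

section Aux

variable {R₀ : Type*} [Ring R₀] {M₀ : Type*} [AddCommGroup M₀] [Module R₀ M₀]

lemma aux_moduleLength_eq_one (h : IsSimpleModule R₀ M₀) : moduleLength R₀ M₀ = 1 := by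
  have hnt : Nontrivial M₀ := h.nontrivial
  apply le_antisymm
  · rw [moduleLength, krullDim_eq_iSup_length]
    rw [show ((1 : WithBot ℕ∞)) = ((1 : ℕ∞) : WithBot ℕ∞) from rfl, WithBot.coe_le_coe]
    apply iSup_le
    intro p
    show (p.length : ℕ∞) ≤ 1
    rw [Nat.cast_le_one]
    by_contra hlen
    push_neg at hlen
    have a01 := p.step ⟨0, by omega⟩
    have a12 := p.step ⟨1, by omega⟩
    have e : (Fin.succ ⟨0, by omega⟩ : Fin (p.length + 1)) = Fin.castSucc ⟨1, by omega⟩ := rfl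
    rw [e] at a01
    rcases h.1.2 (p.toFun (Fin.castSucc ⟨1, by omega⟩)) with hm | hm
    · rw [hm] at a01; exact not_lt_bot (show p.toFun (Fin.castSucc ⟨0, by omega⟩) < ⊥ from a01)
    · rw [hm] at a12; exact not_top_lt (show ⊤ < p.toFun (Fin.succ ⟨1, by omega⟩) from a12)
  · have : (1 : WithBot ℕ∞) = ((RelSeries.fromListIsChain [⊥, ⊤] (by simp)
        (List.isChain_cons_cons.2 ⟨(bot_lt_top : (⊥ : Submodule R₀ M₀) < ⊤), List.isChain_singleton _⟩) :
          LTSeries (Submodule R₀ M₀)).length : WithBot ℕ∞) := by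
      simp [RelSeries.fromListIsChain]
    rw [this]
    exact LTSeries.length_le_krullDim _

lemma aux_moduleLength_ne_one [Subsingleton M₀] : moduleLength R₀ M₀ ≠ 1 := by
  intro h
  have h0 := krullDim_nonpos_of_subsingleton (α := Submodule R₀ M₀)
  rw [moduleLength] at h
  rw [h] at h0
  norm_num at h0

lemma aux_len_quot {A B : Submodule R₀ M₀} (h : A ⋖ B) :
    moduleLength R₀ (↥B ⧸ A.comap B.subtype) = 1 :=
  aux_moduleLength_eq_one ((covBy_iff_quot_is_simple h.le).mp h)

lemma aux_step_ne {A B : Submodule R₀ M₀}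
    (h : moduleLength R₀ (↥B ⧸ A.comap B.subtype) = 1) : A ≠ B := by
  rintro rfl
  have : Subsingleton (↥A ⧸ A.comap A.subtype) := by
    rw [comap_subtype_self]
    exact Submodule.Quotient.subsingleton_iff.mpr rfl
  exact aux_moduleLength_ne_one h

end Aux

abbrev QPt (c : ℂ) := Polynomial ℂ ⧸ Ideal.span {Polynomial.X - Polynomial.C c}

lemma simple_QPt (c : ℂ) : IsSimpleModule (Polynomial ℂ) (QPt c) := by
  rw [isSimpleModule_iff_isCoatom]
  exact Ideal.isMaximal_def.mp
    (PrincipalIdealRing.isMaximal_of_irreducible (Polynomial.irreducible_X_sub_C c))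

lemma zsub_smul (c : ℂ) (y : QPt c) : (X - C c) • y = 0 := by
  obtain ⟨p, rfl⟩ := Ideal.Quotient.mk_surjective (I := Ideal.span {X - C c}) y
  show Ideal.Quotient.mk _ ((X - C c) * p) = 0
  rw [Ideal.Quotient.eq_zero_iff_mem]
  exact Ideal.mul_mem_right p _ (Ideal.subset_span rfl)

lemma zsubA_smul (a c : ℂ) (y : QPt c) : (X - C a) • y = C (c - a) • y := by
  have : (X - C a) = (X - C c) + C (c - a) := by rw [C_sub]; ring
  rw [this, add_smul, zsub_smul, zero_add]

lemma exists_ne_zero_QPt (c : ℂ) : ∃ y : QPt c, y ≠ 0 := by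
  have := (simple_QPt c).nontrivial
  exact exists_ne 0

/-- The submodule `Q_a × 0`. -/
noncomputable def SA (a b : ℂ) : Submodule (Polynomial ℂ) (QPt a × QPt b) :=
  Submodule.prod ⊤ ⊥

/-- The submodule `0 × Q_b`. -/
noncomputable def SB (a b : ℂ) : Submodule (Polynomial ℂ) (QPt a × QPt b) :=
  Submodule.prod ⊥ ⊤

section Classify

variable {a b : ℂ}

lemma split_mem (hab : a ≠ b) (N : Submodule (Polynomial ℂ) (QPt a × QPt b)) {x : QPt a} {y : QPt b}
    (h : (x, y) ∈ N) : (x, 0) ∈ N ∧ (0, y) ∈ N := by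
  have hba : b - a ≠ 0 := sub_ne_zero.mpr (Ne.symm hab)
  have h2 := N.smul_mem (X - C a) h
  have e2 : (X - C a) • ((x, y) : QPt a × QPt b) = (0, C (b - a) • y) := by
    rw [Prod.smul_mk, zsub_smul, zsubA_smul a b]
  rw [e2] at h2
  have h3 := N.smul_mem (C (b - a)⁻¹) h2
  have e3 : (C (b - a)⁻¹ : Polynomial ℂ) • ((0, C (b - a) • y) : QPt a × QPt b) = (0, y) := by
    rw [Prod.smul_mk, smul_zero, smul_smul, ← C_mul, inv_mul_cancel₀ hba, C_1, one_smul]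
  rw [e3] at h3
  refine ⟨?_, h3⟩
  have := N.sub_mem h h3
  simpa using this

lemma classify (hab : a ≠ b) (N : Submodule (Polynomial ℂ) (QPt a × QPt b)) :
    N = ⊥ ∨ N = SA a b ∨ N = SB a b ∨ N = ⊤ := by
  have key : N = Submodule.prod (N.comap (LinearMap.inl (Polynomial ℂ) (QPt a) (QPt b)))
      (N.comap (LinearMap.inr (Polynomial ℂ) (QPt a) (QPt b))) := by
    ext ⟨x, y⟩
    simp only [Submodule.mem_prod, Submodule.mem_comap, LinearMap.inl_apply, LinearMap.inr_apply]
    constructor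
    · intro h; exact (split_mem hab N h)
    · rintro ⟨h1, h2⟩
      have := N.add_mem h1 h2
      simpa using this
  rcases (simple_QPt a).1.2 (N.comap (LinearMap.inl (Polynomial ℂ) (QPt a) (QPt b))) with h1 | h1 <;>
    rcases (simple_QPt b).1.2 (N.comap (LinearMap.inr (Polynomial ℂ) (QPt a) (QPt b))) with h2 | h2 <;>
      rw [h1, h2] at key
  · left; rw [key]; ext ⟨x, y⟩; simp
  · right; right; left; exact key
  · right; left; exact key
  · right; right; right; rw [key]; ext ⟨x, y⟩; simp

lemma SA_ne_bot : SA a b ≠ ⊥ := by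
  obtain ⟨y, hy⟩ := exists_ne_zero_QPt a
  intro h
  have : ((y, 0) : QPt a × QPt b) ∈ SA a b := ⟨trivial, rfl⟩
  rw [h] at this
  exact hy (congrArg Prod.fst (Submodule.mem_bot _ |>.mp this))

lemma SB_ne_bot : SB a b ≠ ⊥ := by
  obtain ⟨y, hy⟩ := exists_ne_zero_QPt b
  intro h
  have : ((0, y) : QPt a × QPt b) ∈ SB a b := ⟨rfl, trivial⟩
  rw [h] at this
  exact hy (congrArg Prod.snd (Submodule.mem_bot _ |>.mp this))

lemma not_top_le_SA : ¬ (⊤ : Submodule (Polynomial ℂ) (QPt a × QPt b)) ≤ SA a b := by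
  obtain ⟨y, hy⟩ := exists_ne_zero_QPt b
  intro h
  exact hy ((h (Submodule.mem_top (x := ((0, y) : QPt a × QPt b)))).2)

lemma not_top_le_SB : ¬ (⊤ : Submodule (Polynomial ℂ) (QPt a × QPt b)) ≤ SB a b := by
  obtain ⟨y, hy⟩ := exists_ne_zero_QPt a
  intro h
  exact hy ((h (Submodule.mem_top (x := ((y, 0) : QPt a × QPt b)))).1)

lemma not_SA_le_SB : ¬ SA a b ≤ SB a b := by
  obtain ⟨y, hy⟩ := exists_ne_zero_QPt a
  intro h
  exact hy ((h (⟨trivial, rfl⟩ : ((y, 0) : QPt a × QPt b) ∈ SA a b)).1)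

lemma not_SB_le_SA : ¬ SB a b ≤ SA a b := by
  obtain ⟨y, hy⟩ := exists_ne_zero_QPt b
  intro h
  exact hy ((h (⟨rfl, trivial⟩ : ((0, y) : QPt a × QPt b) ∈ SB a b)).2)

lemma SA_ne_top : SA a b ≠ ⊤ := fun h => not_top_le_SA h.ge
lemma SB_ne_top : SB a b ≠ ⊤ := fun h => not_top_le_SB h.ge
lemma SA_ne_SB : SA a b ≠ SB a b := fun h => not_SA_le_SB h.le

lemma cov_bot_SA (hab : a ≠ b) : (⊥ : Submodule (Polynomial ℂ) (QPt a × QPt b)) ⋖ SA a b := by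
  refine ⟨bot_lt_iff_ne_bot.mpr SA_ne_bot, fun c h1 h2 => ?_⟩
  rcases classify hab c with h | h | h | h <;> subst h
  · exact lt_irrefl _ h1
  · exact lt_irrefl _ h2
  · exact not_SB_le_SA h2.le
  · exact not_top_lt h2

lemma cov_bot_SB (hab : a ≠ b) : (⊥ : Submodule (Polynomial ℂ) (QPt a × QPt b)) ⋖ SB a b := by
  refine ⟨bot_lt_iff_ne_bot.mpr SB_ne_bot, fun c h1 h2 => ?_⟩
  rcases classify hab c with h | h | h | h <;> subst h
  · exact lt_irrefl _ h1
  · exact not_SA_le_SB h2.le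
  · exact lt_irrefl _ h2
  · exact not_top_lt h2

lemma cov_SA_top (hab : a ≠ b) : SA a b ⋖ (⊤ : Submodule (Polynomial ℂ) (QPt a × QPt b)) := by
  refine ⟨lt_top_iff_ne_top.mpr SA_ne_top, fun c h1 h2 => ?_⟩
  rcases classify hab c with h | h | h | h <;> subst h
  · exact not_lt_bot h1
  · exact lt_irrefl _ h1
  · exact not_SA_le_SB h1.le
  · exact lt_irrefl _ h2

lemma cov_SB_top (hab : a ≠ b) : SB a b ⋖ (⊤ : Submodule (Polynomial ℂ) (QPt a × QPt b)) := by
  refine ⟨lt_top_iff_ne_top.mpr SB_ne_top, fun c h1 h2 => ?_⟩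
  rcases classify hab c with h | h | h | h <;> subst h
  · exact not_lt_bot h1
  · exact not_SB_le_SA h1.le
  · exact lt_irrefl _ h1
  · exact lt_irrefl _ h2

lemma range_eq_SA (hab : a ≠ b) (f : QPt a →ₗ[Polynomial ℂ] (QPt a × QPt b)) (hf : f ≠ 0) :
    LinearMap.range f = SA a b := by
  have hba : b - a ≠ 0 := sub_ne_zero.mpr (Ne.symm hab)
  have hle : LinearMap.range f ≤ SA a b := by
    rintro z ⟨x, rfl⟩
    refine ⟨trivial, ?_⟩
    have h1 : (X - C a) • f x = 0 := by
      rw [← map_smul, zsub_smul, map_zero]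
    have h2 : C (b - a) • (f x).2 = 0 := by
      have := congrArg Prod.snd h1
      rw [Prod.smul_snd] at this
      rw [← zsubA_smul]
      exact this
    have h4 : (f x).2 = (C (b - a)⁻¹ * C (b - a) : Polynomial ℂ) • (f x).2 := by
      rw [← C_mul, inv_mul_cancel₀ hba, C_1, one_smul]
    rw [h4, mul_smul, h2, smul_zero]
    simp
  rcases classify hab (LinearMap.range f) with h | h | h | h
  · exact absurd (LinearMap.range_eq_bot.mp h) hf
  · exact h
  · exact absurd (h ▸ hle) not_SB_le_SA
  · exact absurd (h ▸ hle) not_top_le_SA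

end Classify

section Chains

lemma AdmChain.ext' {M N : Type*} [AddCommGroup M] [Module (Polynomial ℂ) M]
    [AddCommGroup N] [Module (Polynomial ℂ) N] {f : M →ₗ[Polynomial ℂ] N}
    {c d : AdmChain f} (hA : c.A = d.A) (hB : c.B = d.B) : c = d := by
  cases c; cases d
  cases hA; cases hB
  rfl

variable {a b : ℂ}

/-- The `(𝗂,𝗂,𝗃)`-chain with middle submodule `S`. -/
noncomputable def chIIJ (f : QPt a →ₗ[Polynomial ℂ] (QPt a × QPt b))
    (S : Submodule (Polynomial ℂ) (QPt a × QPt b)) : AdmChain f where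
  A := ![⊥, ⊥, ⊥, ⊤]
  B := ![⊥, S, ⊤, ⊤]
  monoA := Fin.monotone_iff_le_succ.mpr (by intro i; fin_cases i <;> simp)
  monoB := Fin.monotone_iff_le_succ.mpr (by intro i; fin_cases i <;> simp)
  compat := by intro k; fin_cases k <;> simp [Submodule.map_bot]
  A_zero := rfl
  B_zero := rfl
  A_last := rfl
  B_last := rfl

/-- The `(𝗂,𝗃,𝗂)`-chain with middle submodule `S`. -/
noncomputable def chIJI (f : QPt a →ₗ[Polynomial ℂ] (QPt a × QPt b))
    (S : Submodule (Polynomial ℂ) (QPt a × QPt b)) (hc : Submodule.map f ⊤ ≤ S) :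
    AdmChain f where
  A := ![⊥, ⊥, ⊤, ⊤]
  B := ![⊥, S, S, ⊤]
  monoA := Fin.monotone_iff_le_succ.mpr (by intro i; fin_cases i <;> simp)
  monoB := Fin.monotone_iff_le_succ.mpr (by intro i; fin_cases i <;> simp)
  compat := by
    intro k; fin_cases k
    · simp [Submodule.map_bot]
    · simp [Submodule.map_bot]
    · exact hc
    · simp
  A_zero := rfl
  B_zero := rfl
  A_last := rfl
  B_last := rfl

end Chains

/-- Lemma 3.5.1(b) of the paper: for `a ≠ b`, `T₁ = ℂ[z]/(z−a)`,
`T₂ = ℂ[z]/(z−a) ⊕ ℂ[z]/(z−b)` and `f : T₁ → T₂` a nonzero `ℂ[z]`-module map, there are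
exactly `2` admissible chains with step types `(𝗂,𝗂,𝗃)`, exactly `1` with step types
`(𝗂,𝗃,𝗂)`, and none with step types `(𝗃,𝗂,𝗂)`. -/
theorem filtration_count_nonzero_map (a b : ℂ) (hab : a ≠ b)
    (f : (Polynomial ℂ ⧸ Ideal.span {Polynomial.X - Polynomial.C a}) →ₗ[Polynomial ℂ]
        ((Polynomial ℂ ⧸ Ideal.span {Polynomial.X - Polynomial.C a}) ×
         (Polynomial ℂ ⧸ Ideal.span {Polynomial.X - Polynomial.C b})))
    (hf : f ≠ 0) :
    Nat.card {c : AdmChain f // StepI c 0 ∧ StepI c 1 ∧ StepJ c 2} = 2 ∧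
    Nat.card {c : AdmChain f // StepI c 0 ∧ StepJ c 1 ∧ StepI c 2} = 1 ∧
    Nat.card {c : AdmChain f // StepJ c 0 ∧ StepI c 1 ∧ StepI c 2} = 0 := by
  haveI hsa : IsSimpleModule (Polynomial ℂ) (QPt a) := simple_QPt a
  have hcovT1 : (⊥ : Submodule (Polynomial ℂ) (QPt a)) ⋖ ⊤ := bot_covBy_top
  have hrange : LinearMap.range f = SA a b := range_eq_SA hab f hf
  have hmap : Submodule.map f ⊤ = SA a b := by
    rw [← LinearMap.range_eq_map]; exact hrange
  refine ⟨?_, ?_, ?_⟩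
  · -- (𝗂,𝗂,𝗃): exactly 2
    rw [Nat.card_eq_two_iff]
    refine ⟨⟨chIIJ f (SA a b), ⟨rfl, aux_len_quot (cov_bot_SA hab)⟩,
        ⟨rfl, aux_len_quot (cov_SA_top hab)⟩, ⟨rfl, aux_len_quot hcovT1⟩⟩,
      ⟨chIIJ f (SB a b), ⟨rfl, aux_len_quot (cov_bot_SB hab)⟩,
        ⟨rfl, aux_len_quot (cov_SB_top hab)⟩, ⟨rfl, aux_len_quot hcovT1⟩⟩, ?_, ?_⟩
    · intro h
      exact SA_ne_SB (congrArg (fun c : AdmChain f => c.B 1) (Subtype.ext_iff.mp h))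
    · rw [Set.eq_univ_iff_forall]
      rintro ⟨c, ⟨h0a, h0b⟩, ⟨h1a, h1b⟩, ⟨h2a, h2b⟩⟩
      have hA1 : c.A 1 = ⊥ := (h0a : c.A 1 = c.A 0).trans c.A_zero
      have hA2 : c.A 2 = ⊥ := (h1a : c.A 2 = c.A 1).trans hA1
      have hB2 : c.B 2 = ⊤ := (h2a : c.B 3 = c.B 2).symm.trans c.B_last
      have hB1ne_bot : c.B 1 ≠ ⊥ := by
        intro h
        exact aux_step_ne (A := c.B 0) (B := c.B 1) h0b (c.B_zero.trans h.symm)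
      have hB1ne_top : c.B 1 ≠ ⊤ := by
        intro h
        exact aux_step_ne (A := c.B 1) (B := c.B 2) h1b (h.trans hB2.symm)
      have hA : c.A = ![⊥, ⊥, ⊥, ⊤] := by
        funext k; fin_cases k
        exacts [c.A_zero, hA1, hA2, c.A_last]
      rcases classify hab (c.B 1) with h | h | h | h
      · exact absurd h hB1ne_bot
      · have hB : c.B = ![⊥, SA a b, ⊤, ⊤] := by
          funext k; fin_cases k
          exacts [c.B_zero, h, hB2, c.B_last]
        simp only [Set.mem_insert_iff, Set.mem_singleton_iff]
        left
        exact Subtype.ext (AdmChain.ext' hA hB)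
      · have hB : c.B = ![⊥, SB a b, ⊤, ⊤] := by
          funext k; fin_cases k
          exacts [c.B_zero, h, hB2, c.B_last]
        simp only [Set.mem_insert_iff, Set.mem_singleton_iff]
        right
        exact Subtype.ext (AdmChain.ext' hA hB)
      · exact absurd h hB1ne_top
  · -- (𝗂,𝗃,𝗂): exactly 1
    rw [Nat.card_eq_one_iff_exists]
    refine ⟨⟨chIJI f (SA a b) (le_of_eq hmap), ⟨rfl, aux_len_quot (cov_bot_SA hab)⟩,
        ⟨rfl, aux_len_quot hcovT1⟩, ⟨rfl, aux_len_quot (cov_SA_top hab)⟩⟩, ?_⟩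
    rintro ⟨c, ⟨h0a, h0b⟩, ⟨h1a, h1b⟩, ⟨h2a, h2b⟩⟩
    have hA1 : c.A 1 = ⊥ := (h0a : c.A 1 = c.A 0).trans c.A_zero
    have hA2 : c.A 2 = ⊤ := by
      rcases hsa.1.2 (c.A 2) with h | h
      · exfalso
        exact aux_step_ne (A := c.A 1) (B := c.A 2) h1b (hA1.trans h.symm)
      · exact h
    have hSA_le_B2 : SA a b ≤ c.B 2 := by
      have := c.compat 2
      rwa [hA2, hmap] at this
    have hB2ne_top : c.B 2 ≠ ⊤ := by
      intro h
      exact aux_step_ne (A := c.B 2) (B := c.B 3) h2b (h.trans c.B_last.symm)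
    have hB2 : c.B 2 = SA a b := by
      rcases classify hab (c.B 2) with h | h | h | h
      · exact absurd (le_bot_iff.mp (h ▸ hSA_le_B2)) SA_ne_bot
      · exact h
      · exact absurd (h ▸ hSA_le_B2) not_SA_le_SB
      · exact absurd h hB2ne_top
    have hB1 : c.B 1 = SA a b := (h1a : c.B 2 = c.B 1).symm.trans hB2
    have hA : c.A = ![⊥, ⊥, ⊤, ⊤] := by
      funext k; fin_cases k
      exacts [c.A_zero, hA1, hA2, c.A_last]
    have hB : c.B = ![⊥, SA a b, SA a b, ⊤] := by
      funext k; fin_cases k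
      exacts [c.B_zero, hB1, hB2, c.B_last]
    exact Subtype.ext (AdmChain.ext' hA hB)
  · -- (𝗃,𝗂,𝗂): none
    haveI : IsEmpty {c : AdmChain f // StepJ c 0 ∧ StepI c 1 ∧ StepI c 2} := by
      refine ⟨?_⟩
      rintro ⟨c, ⟨h0a, h0b⟩, h1, h2⟩
      have hB1 : c.B 1 = ⊥ := (h0a : c.B 1 = c.B 0).trans c.B_zero
      have hA1 : c.A 1 = ⊤ := by
        rcases hsa.1.2 (c.A 1) with h | h
        · exfalso
          exact aux_step_ne (A := c.A 0) (B := c.A 1) h0b (c.A_zero.trans h.symm)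
        · exact h
      have := c.compat 1
      rw [hA1, hmap, hB1] at this
      exact SA_ne_bot (le_bot_iff.mp this)
    exact Nat.card_of_isEmpty
end
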